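/- The bound V^π(s) < γ^{H−1} on safe states is not guaranteed for arbitrary policies: there exist a deterministic SMDP (a state space S, nonempty action space A, transition function step : S → A → S, a partition of S into pairwise disjoint sets S_fail, S_dead, S_safe satisfying the safe-action assumption and the dead-end horizon assumption for some H ≥ 1 and γ ∈ (0,1)), a safe state s ∈ S_safe, and a policy π : S → A such that V^π(s) ≥ γ^{H−1}. Hence the safety critic of a suboptimal policy π, with threshold γ^{H−1}, can misclassify a safe state as a dead-end. -/

import Mathlib

noncomputable section

/-- Trajectory of policy `π` from state `s` after `n` steps. -/
def traj {S A : Type*} (step : S → A → S) (π : S → A) (s : S) (n : ℕ) : S :=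
  (fun x => step x (π x))^[n] s

/-- Cost value function: `γ ^ τ_π(s)` where `τ_π(s)` is the first failure time,
and `0` if the trajectory never visits `Sfail`. -/
noncomputable def Vc {S A : Type*} (step : S → A → S) (Sfail : Set S) (γ : ℝ)
    (π : S → A) (s : S) : ℝ :=
  haveI : DecidablePred fun n => traj step π s n ∈ Sfail := fun _ => Classical.dec _
  haveI : Decidable (∃ n, traj step π s n ∈ Sfail) := Classical.dec _
  if h : ∃ n, traj step π s n ∈ Sfail then γ ^ Nat.find h else 0

/-- Action-cost function `Q^π(s, a) = γ · V^π(step s a)`. -/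
noncomputable def Qc {S A : Type*} (step : S → A → S) (Sfail : Set S) (γ : ℝ)
    (π : S → A) (s : S) (a : A) : ℝ :=
  γ * Vc step Sfail γ π (step s a)

/-- Optimal cost value function `V*(s) = ⨅_π V^π(s)`. -/
noncomputable def Vstar {S A : Type*} (step : S → A → S) (Sfail : Set S) (γ : ℝ)
    (s : S) : ℝ :=
  ⨅ π : S → A, Vc step Sfail γ π s

/-- Optimal action-cost function `Q*(s, a) = ⨅_π Q^π(s, a)`. -/
noncomputable def Qstar {S A : Type*} (step : S → A → S) (Sfail : Set S) (γ : ℝ)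
    (s : S) (a : A) : ℝ :=
  ⨅ π : S → A, Qc step Sfail γ π s a

/-- The bound `V^π(s) < γ^{H-1}` on safe states fails for arbitrary (suboptimal)
policies: there is a deterministic SMDP satisfying the safe-action and dead-end
horizon assumptions, a safe state `s`, and a policy `π` with `V^π(s) ≥ γ^{H-1}`. -/
theorem stmt10 :
    ∃ (S A : Type) (_ : Nonempty A) (step : S → A → S) (γ : ℝ)
      (Sfail Sdead Ssafe : Set S) (H : ℕ) (s : S) (π : S → A),
      0 < γ ∧ γ < 1 ∧ 1 ≤ H ∧
      Ssafe = (Sfail ∪ Sdead)ᶜ ∧ Disjoint Sfail Sdead ∧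
      (∀ s ∈ Ssafe, ∃ a : A, step s a ∈ Ssafe) ∧
      (∀ s ∈ Sdead, ∀ π : S → A, ∃ n ≤ H - 1, traj step π s n ∈ Sfail) ∧
      s ∈ Ssafe ∧ γ ^ (H - 1) ≤ Vc step Sfail γ π s := by
  refine ⟨Bool, Bool, ⟨true⟩, fun _ a => a, 1/2, {false}, ∅, ({false} ∪ ∅ : Set Bool)ᶜ, 2, true, fun _ => false, by norm_num, by norm_num, by norm_num, rfl, by simp, ?_, by simp, ?_, ?_⟩
  · intro s hs
    exact ⟨true, by simp⟩
  · simp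
  · have h : ∃ n, traj (fun (_ : Bool) (a : Bool) => a) (fun _ => false) true n ∈ ({false} : Set Bool) :=
      ⟨1, by simp [traj]⟩
    rw [Vc, dif_pos h]
    have hf : Nat.find h = 1 := by
      rw [Nat.find_eq_iff]
      constructor
      · simp [traj]
      · intro n hn
        interval_cases n
        simp [traj]
    refine le_trans (b := (1/2:ℝ)^1) (by norm_num) (pow_le_pow_of_le_one (by norm_num) (by norm_num) ?_)
    exact le_of_eq (by convert hf)
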